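/- arXiv:1901.08372 — 6 statements merged into one kernel-verified Lean document; each statement's English description precedes it below -/
import Mathlib

section
/- Let M = {m_0 < m_1 < ⋯ < m_n} be a finite strictly increasing set of non-negative integers with the MC property, and put m = 1 + m_n. If A ⊆ M satisfies (A + r) mod m ⊆ M for some integer r with r ≢ 0 (mod m), then |A| ≤ 2. -/
/-- Lemma 2.5: let `m₀ < m₁ < ⋯ < mₙ` be a strictly increasing finite sequence of
non-negative integers with the MC property and put `m = 1 + mₙ`.  If `A` is a set of
members of the sequence such that `(A + r) mod m` again consists of members of the
sequence, for some `r ≢ 0 (mod m)`, then `|A| ≤ 2`. -/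
theorem mc_shift_card_le_two (n : ℕ) (ms : Fin (n + 1) → ℕ)
    (hmono : StrictMono ms)
    (hMC : ∀ a b c d : Fin (n + 1), a ≠ b → c ≠ d →
        (ms a : ℤ) - ms b = (ms c : ℤ) - ms d → a = c ∧ b = d)
    (m : ℕ) (hm : m = 1 + ms (Fin.last n))
    (A : Finset ℤ) (hA : ∀ a ∈ A, ∃ i : Fin (n + 1), a = (ms i : ℤ))
    (r : ℤ) (hr : ¬ ((m : ℤ) ∣ r))
    (hshift : ∀ a ∈ A, ∃ i : Fin (n + 1), (a + r) % (m : ℤ) = (ms i : ℤ)) :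
    A.card ≤ 2 := by
  classical
  have hmpos : 0 < (m : ℤ) := by exact_mod_cast (by omega : 0 < m)
  have hbound : ∀ i : Fin (n + 1), (ms i : ℤ) < (m : ℤ) := by
    intro i
    have h1 : ms i ≤ ms (Fin.last n) := hmono.monotone (Fin.le_last i)
    exact_mod_cast (by omega : ms i < m)
  have hrm0 : 0 ≤ r % (m : ℤ) := Int.emod_nonneg r (by positivity)
  have hrmlt : r % (m : ℤ) < m := Int.emod_lt_of_pos r hmpos
  have hrmne : r % (m : ℤ) ≠ 0 := fun h => hr (Int.dvd_of_emod_eq_zero h)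
  set d : ℤ → ℤ := fun a => (a + r) % (m : ℤ) - a with hd
  have hdmod : ∀ a : ℤ, d a % (m : ℤ) = r % (m : ℤ) := by
    intro a
    have h : ((a + r) % (m : ℤ) - a) % (m : ℤ) = ((a + r) - a) % (m : ℤ) := by
      rw [Int.sub_emod, Int.emod_emod_of_dvd _ dvd_rfl, ← Int.sub_emod]
    simpa [hd] using h
  have hdval : ∀ a ∈ A, d a ∈ ({r % (m : ℤ), r % (m : ℤ) - m} : Finset ℤ) := by
    intro a ha
    obtain ⟨i, hi⟩ := hA a ha
    obtain ⟨j, hj⟩ := hshift a ha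
    have hda : d a = (ms j : ℤ) - ms i := by
      simp only [hd]; rw [hj, hi]
    have hj0 : (0 : ℤ) ≤ ms j := by positivity
    have hi0 : (0 : ℤ) ≤ ms i := by positivity
    have h1 : -(m : ℤ) < d a := by have := hbound i; linarith [hda]
    have h2 : d a < m := by have := hbound j; linarith [hda]
    simp only [Finset.mem_insert, Finset.mem_singleton]
    rcases le_or_gt 0 (d a) with h | h
    · left; rw [← hdmod a]; exact (Int.emod_eq_of_lt h h2).symm
    · right
      have h3 : (d a + m) % (m : ℤ) = r % (m : ℤ) := by
        rw [show d a + (m : ℤ) = d a + (m : ℤ) * 1 by ring, Int.add_mul_emod_self_left,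
          hdmod a]
      have h4 : (d a + m) % (m : ℤ) = d a + m :=
        Int.emod_eq_of_lt (by linarith) (by linarith)
      have := h4.symm.trans h3
      linarith
  have hinj : Set.InjOn d A := by
    intro a ha b hb hab
    obtain ⟨i, hi⟩ := hA a ha
    obtain ⟨j, hj⟩ := hshift a ha
    obtain ⟨i', hi'⟩ := hA b hb
    obtain ⟨j', hj'⟩ := hshift b hb
    have hda : d a = (ms j : ℤ) - ms i := by simp only [hd]; rw [hj, hi]
    have hdb : d b = (ms j' : ℤ) - ms i' := by simp only [hd]; rw [hj', hi']
    have hne0 : d a ≠ 0 := by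
      intro h0
      apply hrmne
      rw [← hdmod a, h0, Int.zero_emod]
    have hij : j ≠ i := by
      intro h; apply hne0; rw [hda, h]; ring
    have hij' : j' ≠ i' := by
      intro h; apply hne0; rw [hab, hdb, h]; ring
    have := hMC j i j' i' hij hij' (by rw [← hda, ← hdb, hab])
    rw [hi, hi', this.2]
  calc A.card ≤ ({r % (m : ℤ), r % (m : ℤ) - m} : Finset ℤ).card :=
        Finset.card_le_card_of_injOn d hdval hinj
    _ ≤ 2 := (Finset.card_insert_le _ _).trans (by simp)
end

section
/- Any finite semigroup S can be embedded in a finite semigroup T generated by two elements α and β, where α is idempotent (α² = α) and β is nilpotent (βᵏ is a zero element for some k). -/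
set_option maxHeartbeats 1000000

/-- `spow a k` is the `(k+1)`-st power of `a` in a semigroup. -/
def spow {T : Type*} [Semigroup T] (a : T) : ℕ → T
  | 0 => a
  | n + 1 => spow a n * a

namespace EmbedAux

/-- Partial transformations of `Q`. -/
def PT (Q : Type) : Type := Q → Option Q

instance (Q : Type) : Semigroup (PT Q) where
  mul f g := fun q => (f q).bind g
  mul_assoc f g h := funext fun q => Option.bind_assoc (f q) g h

theorem mul_def {Q : Type} (f g : PT Q) (q : Q) : (f * g) q = (f q).bind g := rfl

instance (Q : Type) [Finite Q] : Finite (PT Q) := by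
  unfold PT
  cases nonempty_fintype Q
  classical
  infer_instance

theorem spow_coe {M : Type*} [Semigroup M] (A : Subsemigroup M) (a : A) (k : ℕ) :
    ((spow a k : A) : M) = spow (a : M) k := by
  induction k with
  | zero => rfl
  | succ n ih =>
    show ((spow a n : A) : M) * (a : M) = spow (a : M) n * (a : M)
    rw [ih]

variable (S : Type) [Semigroup S] [Fintype S]

instance : Finite (WithOne S) := inferInstanceAs (Finite (Option S))

abbrev Q : Type := WithOne S × Fin (Fintype.card S + 1)

/-- enumeration of S¹ -/
noncomputable def gfun (i : Fin (Fintype.card S + 1)) : WithOne S :=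
  if h : (i : ℕ) = 0 then 1
  else (((Fintype.equivFin S).symm ⟨(i : ℕ) - 1, by omega⟩ : S) : WithOne S)

omit [Semigroup S] in
theorem gfun_zero : gfun S 0 = 1 := rfl

omit [Semigroup S] in
theorem gfun_idx (i : Fin (Fintype.card S + 1)) (x : S)
    (h : (i : ℕ) = (Fintype.equivFin S x : ℕ) + 1) : gfun S i = (x : WithOne S) := by
  rw [gfun, dif_neg (by omega)]
  congr 1
  rw [show (⟨(i : ℕ) - 1, by omega⟩ : Fin (Fintype.card S)) = Fintype.equivFin S x from
    Fin.ext (by simp [h])]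
  simp

/-- the idempotent -/
noncomputable def amap : PT (Q S) := fun p => some (p.1 * gfun S p.2, 0)

/-- the nilpotent -/
def bmap : PT (Q S) := fun p =>
  if h : (p.2 : ℕ) + 1 ≤ Fintype.card S then some (p.1, ⟨(p.2 : ℕ) + 1, by omega⟩) else none

omit [Semigroup S] in
theorem spow_bmap (k : ℕ) (p : Q S) :
    spow (bmap S) k p =
      if h : (p.2 : ℕ) + k + 1 ≤ Fintype.card S then some (p.1, ⟨(p.2 : ℕ) + k + 1, by omega⟩)
      else none := by
  induction k with
  | zero =>
    simp only [Nat.add_zero]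
    rfl
  | succ n ih =>
    show (spow (bmap S) n * bmap S) p = _
    rw [mul_def, ih]
    by_cases h1 : (p.2 : ℕ) + n + 1 ≤ Fintype.card S
    · rw [dif_pos h1]
      show bmap S _ = _
      rw [bmap]
      by_cases h2 : (p.2 : ℕ) + (n + 1) + 1 ≤ Fintype.card S
      · rw [dif_pos (show (p.2 : ℕ) + n + 1 + 1 ≤ Fintype.card S by omega), dif_pos h2]
        rfl
      · rw [dif_neg (show ¬((p.2 : ℕ) + n + 1 + 1 ≤ Fintype.card S) by omega), dif_neg h2]
    · rw [dif_neg h1, dif_neg (by omega)]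
      rfl

/-- the embedding map -/
noncomputable def F (x : S) : PT (Q S) := fun p => some (p.1 * gfun S p.2 * (x : WithOne S), 0)

theorem F_eq (x : S) :
    F S x = amap S * spow (bmap S) (Fintype.equivFin S x : ℕ) * amap S := by
  funext p
  have hm : (Fintype.equivFin S x : ℕ) < Fintype.card S := (Fintype.equivFin S x).isLt
  rw [mul_def, mul_def]
  show _ = ((spow (bmap S) _) (p.1 * gfun S p.2, 0)).bind (amap S)
  rw [spow_bmap]
  rw [dif_pos (by show ((0 : Fin (Fintype.card S + 1)) : ℕ) + _ + 1 ≤ _; simp)]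
  have hg : gfun S ⟨((0 : Fin (Fintype.card S + 1)) : ℕ) + (Fintype.equivFin S x : ℕ) + 1,
      by simp only [Fin.val_zero]; omega⟩ = (x : WithOne S) := gfun_idx S _ x (by simp)
  show F S x p = some ((p.1 * gfun S p.2) *
      gfun S ⟨((0 : Fin (Fintype.card S + 1)) : ℕ) + (Fintype.equivFin S x : ℕ) + 1,
        by simp only [Fin.val_zero]; omega⟩, 0)
  rw [F, hg]

theorem amap_idem : amap S * amap S = amap S := by
  funext p
  rw [mul_def]
  show amap S (p.1 * gfun S p.2, 0) = _
  show some ((p.1 * gfun S p.2) * gfun S 0, 0) = some (p.1 * gfun S p.2, 0)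
  rw [gfun_zero, mul_one]

theorem F_mul (x y : S) : F S (x * y) = F S x * F S y := by
  funext p
  rw [mul_def]
  show _ = F S y (p.1 * gfun S p.2 * x, 0)
  show some (p.1 * gfun S p.2 * ((x * y : S) : WithOne S), 0)
      = some ((p.1 * gfun S p.2 * x) * gfun S 0 * y, 0)
  simp only [gfun_zero, mul_one, WithOne.coe_mul, mul_assoc]

theorem F_inj : Function.Injective (F S) := by
  intro x y hxy
  have := congrFun hxy (1, 0)
  simp only [F, gfun_zero, mul_one, one_mul, Option.some.injEq, Prod.mk.injEq] at this
  exact WithOne.coe_inj.mp this.1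

theorem pair_top {M : Type*} [Semigroup M] (u v : M)
    (hu : u ∈ Subsemigroup.closure {u, v}) (hv : v ∈ Subsemigroup.closure {u, v}) :
    Subsemigroup.closure {(⟨u, hu⟩ : Subsemigroup.closure {u, v}), ⟨v, hv⟩} = ⊤ := by
  apply top_unique
  rw [← Subsemigroup.closure_closure_coe_preimage (s := ({u, v} : Set M))]
  apply Subsemigroup.closure_mono
  rintro ⟨t, htA⟩ ht
  rcases ht with h | h
  · exact Or.inl (Subtype.ext h)
  · exact Or.inr (Subtype.ext h)

theorem main (S : Type) [Semigroup S] [Fintype S] :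
    ∃ (T : Type) (_ : Semigroup T) (_ : Fintype T) (f : S → T) (α β : T),
      Function.Injective f ∧
      (∀ x y : S, f (x * y) = f x * f y) ∧
      Subsemigroup.closure {α, β} = ⊤ ∧
      α * α = α ∧
      (∃ (z : T) (k : ℕ), (∀ t : T, z * t = z ∧ t * z = z) ∧ spow β k = z) := by
  classical
  have hα : amap S ∈ Subsemigroup.closure {amap S, bmap S} :=
    Subsemigroup.subset_closure (by simp)
  have hβ : bmap S ∈ Subsemigroup.closure {amap S, bmap S} :=
    Subsemigroup.subset_closure (by simp)
  have hspow : ∀ (x : PT (Q S)), x ∈ Subsemigroup.closure {amap S, bmap S} → ∀ k,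
      spow x k ∈ Subsemigroup.closure {amap S, bmap S} := by
    intro x hx k
    induction k with
    | zero => exact hx
    | succ n ih => exact Subsemigroup.mul_mem _ ih hx
  have hFmem : ∀ x : S, F S x ∈ Subsemigroup.closure {amap S, bmap S} := fun x => by
    rw [F_eq]
    exact Subsemigroup.mul_mem _ (Subsemigroup.mul_mem _ hα (hspow _ hβ _)) hα
  haveI : Finite (Subsemigroup.closure {amap S, bmap S} : Subsemigroup (PT (Q S))) :=
    Subtype.finite
  refine ⟨Subsemigroup.closure {amap S, bmap S}, inferInstance, Fintype.ofFinite _,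
    fun x => ⟨F S x, hFmem x⟩, ⟨amap S, hα⟩, ⟨bmap S, hβ⟩, ?_, ?_, ?_, ?_, ?_⟩
  · intro x y hxy
    exact F_inj S (congrArg Subtype.val hxy)
  · intro x y
    exact Subtype.ext (F_mul S x y)
  · exact pair_top (amap S) (bmap S) hα hβ
  · exact Subtype.ext (amap_idem S)
  · refine ⟨spow ⟨bmap S, hβ⟩ (Fintype.card S), Fintype.card S, ?_, rfl⟩
    have hz : ((spow (⟨bmap S, hβ⟩ : Subsemigroup.closure {amap S, bmap S}) (Fintype.card S) :
        Subsemigroup.closure {amap S, bmap S}) : PT (Q S)) = fun _ => none := by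
      rw [spow_coe]
      funext p
      rw [spow_bmap, dif_neg (by omega)]
    set z := spow (⟨bmap S, hβ⟩ : Subsemigroup.closure {amap S, bmap S}) (Fintype.card S) with hzdef
    intro t
    constructor
    · apply Subtype.ext
      funext q
      show ((z : PT (Q S)) q).bind (t : PT (Q S)) = (z : PT (Q S)) q
      rw [hz]
      rfl
    · apply Subtype.ext
      funext q
      show ((t : PT (Q S)) q).bind (z : PT (Q S)) = (z : PT (Q S)) q
      rw [hz]
      cases (t : PT (Q S)) q <;> rfl

end EmbedAux

/-- Theorem 1.1: any finite semigroup `S` embeds in a finite semigroup `T` generated by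
two elements `α` and `β`, where `α` is idempotent and `β` is nilpotent (some power of
`β` is a zero element of `T`). -/
theorem embed_finite_semigroup_two_generated (S : Type*) [Semigroup S] [Fintype S] :
    ∃ (T : Type) (_ : Semigroup T) (_ : Fintype T) (f : S → T) (α β : T),
      Function.Injective f ∧
      (∀ x y : S, f (x * y) = f x * f y) ∧
      Subsemigroup.closure {α, β} = ⊤ ∧
      α * α = α ∧
      (∃ (z : T) (k : ℕ), (∀ t : T, z * t = z ∧ t * z = z) ∧ spow β k = z) := by
  classical
  set e : Fin (Fintype.card S) ≃ S := (Fintype.equivFin S).symm with he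
  letI : Mul (Fin (Fintype.card S)) := ⟨fun a b => e.symm (e a * e b)⟩
  have hmul : ∀ a b : Fin (Fintype.card S), a * b = e.symm (e a * e b) := fun _ _ => rfl
  letI : Semigroup (Fin (Fintype.card S)) :=
    { mul_assoc := by
        intro a b c
        simp only [hmul, Equiv.apply_symm_apply, mul_assoc] }
  have hj : ∀ a b : S, e.symm (a * b) = e.symm a * e.symm b := by
    intro a b
    simp only [hmul, Equiv.apply_symm_apply]
  obtain ⟨T, i1, i2, f, a, b, hinj, hhom, hcl, hid, hz⟩ := EmbedAux.main (Fin (Fintype.card S))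
  refine ⟨T, i1, i2, fun x => f (e.symm x), a, b, ?_, ?_, hcl, hid, hz⟩
  · exact fun x y hxy => e.symm.injective (hinj hxy)
  · intro x y
    simp only [hj, hhom]
end

section
/- In any semigroup generated by two idempotents e and f, the set of idempotents has cardinality at most 6. -/
section AuxMonoid

variable {M : Type*} [Monoid M]

private lemma alt_comm (E F : M) (n : ℕ) : E * (F * E) ^ n = (E * F) ^ n * E := by
  induction n with
  | zero => simp
  | succ n ih =>
    rw [pow_succ, ← mul_assoc, ih, pow_succ]
    simp only [mul_assoc]

private lemma tail_absorb (E F : M) (hE : E * E = E) (n : ℕ) :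
    E * ((E * F) ^ n * E) = (E * F) ^ n * E := by
  rw [← alt_comm, ← mul_assoc, hE]

private lemma gen_mul (a t : M) (ht : ∀ b : ℕ, t * (a ^ b * t) = a ^ b * t) (b c : ℕ) :
    (a ^ b * t) * (a ^ c * t) = a ^ (b + c) * t := by
  rw [mul_assoc, ht, ← mul_assoc, ← pow_add]

private lemma gen_pow (a t : M) (ht : ∀ b : ℕ, t * (a ^ b * t) = a ^ b * t) {m : ℕ}
    (hx : (a ^ m * t) * (a ^ m * t) = a ^ m * t) :
    ∀ k : ℕ, a ^ (m * (k + 1)) * t = a ^ m * t := by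
  intro k
  induction k with
  | zero => simp
  | succ k ih =>
    have h2 : m * (k + 1 + 1) = m * (k + 1) + m := by ring
    rw [h2, ← gen_mul a t ht, ih, hx]

private lemma gen_uniq (a t : M) (ht : ∀ b : ℕ, t * (a ^ b * t) = a ^ b * t) {m n : ℕ}
    (hx : (a ^ (m + 1) * t) * (a ^ (m + 1) * t) = a ^ (m + 1) * t)
    (hy : (a ^ (n + 1) * t) * (a ^ (n + 1) * t) = a ^ (n + 1) * t) :
    a ^ (m + 1) * t = a ^ (n + 1) * t := by
  have h1 := gen_pow a t ht hx n
  have h2 := gen_pow a t ht hy m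
  rw [← h1, ← h2, Nat.mul_comm]

/-- Alternating words in two letters. -/
private def IsAlt (E F z : M) : Prop :=
  ∃ n : ℕ, z = (E * F) ^ (n + 1) ∨ z = (F * E) ^ (n + 1) ∨
    z = (E * F) ^ n * E ∨ z = (F * E) ^ n * F

private lemma isAlt_swap {E F z : M} (h : IsAlt E F z) : IsAlt F E z := by
  obtain ⟨n, h⟩ := h
  exact ⟨n, by tauto⟩

private lemma pow_eqn (a : M) {i j : ℕ} (h : i = j) : a ^ i = a ^ j := by rw [h]

private lemma pF (E F : M) (hF : F * F = F) (n : ℕ) :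
    (E * F) ^ (n + 1) * F = (E * F) ^ (n + 1) := by
  rw [pow_succ, mul_assoc, mul_assoc, hF]

private lemma Ep (E F : M) (hE : E * E = E) (n : ℕ) :
    E * (E * F) ^ (n + 1) = (E * F) ^ (n + 1) := by
  rw [pow_succ', ← mul_assoc, ← mul_assoc, hE]

private lemma isAlt_mul_aux (E F : M) (hE : E * E = E) (hF : F * F = F) {x y : M} (m : ℕ)
    (hx : x = (E * F) ^ (m + 1) ∨ x = (E * F) ^ m * E) (hy : IsAlt E F y) :
    IsAlt E F (x * y) := by
  obtain ⟨n, hy⟩ := hy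
  have hq : (F * E) ^ (n + 1) = F * ((E * F) ^ n * E) := by
    rw [pow_succ, ← mul_assoc, ← alt_comm F E, mul_assoc]
  rcases hx with rfl | rfl
  · rcases hy with rfl | rfl | rfl | rfl
    · exact ⟨m + n + 1, Or.inl (by rw [← pow_add]; exact pow_eqn _ (by omega))⟩
    · refine ⟨m + 1 + n, Or.inr (Or.inr (Or.inl ?_))⟩
      rw [hq, ← mul_assoc, pF E F hF, ← mul_assoc, ← pow_add]
    · refine ⟨m + 1 + n, Or.inr (Or.inr (Or.inl ?_))⟩
      rw [← mul_assoc, ← pow_add]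
    · refine ⟨m + n, Or.inl ?_⟩
      rw [← alt_comm F E, ← mul_assoc, pF E F hF, ← pow_add]
      exact pow_eqn _ (by omega)
  · rcases hy with rfl | rfl | rfl | rfl
    · refine ⟨m + n, Or.inl ?_⟩
      rw [mul_assoc, Ep E F hE, ← pow_add]
      exact pow_eqn _ (by omega)
    · refine ⟨m + (n + 1), Or.inr (Or.inr (Or.inl ?_))⟩
      rw [mul_assoc, alt_comm E F, ← mul_assoc, ← pow_add]
    · exact ⟨m + n, Or.inr (Or.inr (Or.inl (gen_mul (E * F) E (tail_absorb E F hE) m n)))⟩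
    · refine ⟨m + n, Or.inl ?_⟩
      rw [← alt_comm F E, ← mul_assoc, mul_assoc ((E * F) ^ m) E F, ← pow_succ, ← pow_add]
      exact pow_eqn _ (by omega)

private lemma isAlt_mul (E F : M) (hE : E * E = E) (hF : F * F = F) {x y : M}
    (hx : IsAlt E F x) (hy : IsAlt E F y) : IsAlt E F (x * y) := by
  obtain ⟨m, hm⟩ := hx
  rcases hm with h | h | h | h
  · exact isAlt_mul_aux E F hE hF m (Or.inl h) hy
  · exact isAlt_swap (isAlt_mul_aux F E hF hE m (Or.inl h) (isAlt_swap hy))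
  · exact isAlt_mul_aux E F hE hF m (Or.inr h) hy
  · exact isAlt_swap (isAlt_mul_aux F E hF hE m (Or.inr h) (isAlt_swap hy))

end AuxMonoid

/-- In any semigroup generated by two idempotents, the set of idempotents is finite of
cardinality at most 6. -/
theorem idempotents_card_le_six (S : Type*) [Semigroup S] (e f : S)
    (he : e * e = e) (hf : f * f = f)
    (hgen : Subsemigroup.closure {e, f} = (⊤ : Subsemigroup S)) :
    {x : S | x * x = x}.Finite ∧ {x : S | x * x = x}.ncard ≤ 6 := by
  classical
  set E : WithOne S := (e : WithOne S) with hEdef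
  set F : WithOne S := (f : WithOne S) with hFdef
  have hE : E * E = E := by rw [hEdef, ← WithOne.coe_mul, he]
  have hF : F * F = F := by rw [hFdef, ← WithOne.coe_mul, hf]
  -- every element of S is an alternating word
  have key : ∀ x : S, IsAlt E F (x : WithOne S) := by
    intro x
    have hx : x ∈ Subsemigroup.closure ({e, f} : Set S) := by
      rw [hgen]; trivial
    induction hx using Subsemigroup.closure_induction with
    | mem z hz =>
      rcases hz with rfl | rfl
      · exact ⟨0, Or.inr (Or.inr (Or.inl (by simp [hEdef])))⟩
      · exact ⟨0, Or.inr (Or.inr (Or.inr (by simp [hFdef])))⟩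
    | mul a b ha hb iha ihb =>
      rw [WithOne.coe_mul]
      exact isAlt_mul E F hE hF iha ihb
  -- the four nontrivial classes
  let C1 : Set S := {x | x * x = x ∧ ∃ n : ℕ, (x : WithOne S) = (E * F) ^ (n + 1)}
  let C2 : Set S := {x | x * x = x ∧ ∃ n : ℕ, (x : WithOne S) = (F * E) ^ (n + 1)}
  let C3 : Set S := {x | x * x = x ∧ ∃ n : ℕ, (x : WithOne S) = (E * F) ^ (n + 1) * E}
  let C4 : Set S := {x | x * x = x ∧ ∃ n : ℕ, (x : WithOne S) = (F * E) ^ (n + 1) * F}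
  have coe_idem : ∀ {x : S}, x * x = x → (x : WithOne S) * (x : WithOne S) = (x : WithOne S) := by
    intro x hx
    rw [← WithOne.coe_mul, hx]
  -- each class is a subsingleton
  have sub_of : ∀ (a t : WithOne S), (∀ b : ℕ, t * (a ^ b * t) = a ^ b * t) →
      Set.Subsingleton {x : S | x * x = x ∧ ∃ n : ℕ, (x : WithOne S) = a ^ (n + 1) * t} := by
    intro a t ht x hx y hy
    obtain ⟨hxx, m, hxm⟩ := hx
    obtain ⟨hyy, n, hyn⟩ := hy
    have hx2 : (a ^ (m + 1) * t) * (a ^ (m + 1) * t) = a ^ (m + 1) * t := by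
      rw [← hxm]; exact coe_idem hxx
    have hy2 : (a ^ (n + 1) * t) * (a ^ (n + 1) * t) = a ^ (n + 1) * t := by
      rw [← hyn]; exact coe_idem hyy
    have := gen_uniq a t ht hx2 hy2
    rw [← hxm, ← hyn] at this
    exact WithOne.coe_inj.mp this
  have s1 : C1.Subsingleton := by
    have h := sub_of (E * F) 1 (fun b => one_mul _)
    intro x hx y hy
    exact h ⟨hx.1, by simpa [mul_one] using hx.2⟩ ⟨hy.1, by simpa [mul_one] using hy.2⟩
  have s2 : C2.Subsingleton := by
    have h := sub_of (F * E) 1 (fun b => one_mul _)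
    intro x hx y hy
    exact h ⟨hx.1, by simpa [mul_one] using hx.2⟩ ⟨hy.1, by simpa [mul_one] using hy.2⟩
  have s3 : C3.Subsingleton := sub_of (E * F) E (tail_absorb E F hE)
  have s4 : C4.Subsingleton := sub_of (F * E) F (tail_absorb F E hF)
  -- pick representatives
  let c : Set S → S := fun C => if h : C.Nonempty then h.choose else e
  have hc : ∀ C : Set S, ∀ x ∈ C, C.Subsingleton → x = c C := by
    intro C x hx hs
    have hne : C.Nonempty := ⟨x, hx⟩
    simp only [c, dif_pos hne]
    exact hs hx hne.choose_spec
  -- the idempotents are contained in an explicit 6-element set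
  have hsub : {x : S | x * x = x} ⊆ {e, f, c C1, c C2, c C3, c C4} := by
    intro x hx
    simp only [Set.mem_setOf_eq] at hx
    obtain ⟨n, h | h | h | h⟩ := key x
    · have : x = c C1 := hc C1 x ⟨hx, n, h⟩ s1
      simp [this]
    · have : x = c C2 := hc C2 x ⟨hx, n, h⟩ s2
      simp [this]
    · cases n with
      | zero =>
        have hxe : (x : WithOne S) = E := by simpa using h
        rw [hEdef] at hxe
        have : x = e := WithOne.coe_inj.mp hxe
        simp [this]
      | succ n =>
        have : x = c C3 := hc C3 x ⟨hx, n, h⟩ s3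
        simp [this]
    · cases n with
      | zero =>
        have hxf : (x : WithOne S) = F := by simpa using h
        rw [hFdef] at hxf
        have : x = f := WithOne.coe_inj.mp hxf
        simp [this]
      | succ n =>
        have : x = c C4 := hc C4 x ⟨hx, n, h⟩ s4
        simp [this]
  have hfin6 : ({e, f, c C1, c C2, c C3, c C4} : Set S).Finite := Set.toFinite _
  refine ⟨hfin6.subset hsub, ?_⟩
  calc {x : S | x * x = x}.ncard ≤ ({e, f, c C1, c C2, c C3, c C4} : Set S).ncard :=
        Set.ncard_le_ncard hsub hfin6
    _ ≤ 6 := by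
        apply le_trans (Set.ncard_insert_le _ _)
        have h5 : ({f, c C1, c C2, c C3, c C4} : Set S).ncard ≤ 5 := by
          apply le_trans (Set.ncard_insert_le _ _)
          have h4 : ({c C1, c C2, c C3, c C4} : Set S).ncard ≤ 4 := by
            apply le_trans (Set.ncard_insert_le _ _)
            have h3 : ({c C2, c C3, c C4} : Set S).ncard ≤ 3 := by
              apply le_trans (Set.ncard_insert_le _ _)
              have h2 : ({c C3, c C4} : Set S).ncard ≤ 2 := by
                apply le_trans (Set.ncard_insert_le _ _)
                simp [Set.ncard_singleton]
              omega
            omega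
          omega
        omega
end

section
/- A semigroup generated by two idempotents contains no three-element chain of idempotents: there do not exist idempotents a, b, c with a ≠ b, b ≠ c, a ≠ c such that ab = ba = a, bc = cb = b. -/
section ChainAux

variable {S : Type*} [Semigroup S]

/-- `chainW e f k` is the alternating word `(ef)^k e`. -/
def chainW (e f : S) : ℕ → S
  | 0 => e
  | k + 1 => chainW e f k * (f * e)

variable {e f : S}

lemma chainW_mul_e (he : e * e = e) : ∀ k, chainW e f k * e = chainW e f k
  | 0 => he
  | k + 1 => by
    show chainW e f k * (f * e) * e = _
    rw [mul_assoc, mul_assoc, he]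
    rfl

lemma chainW_add (he : e * e = e) : ∀ j k,
    chainW e f j * chainW e f k = chainW e f (j + k)
  | j, 0 => chainW_mul_e he j
  | j, k + 1 => by
    show chainW e f j * (chainW e f k * (f * e)) = chainW e f ((j + k) + 1)
    rw [← mul_assoc, chainW_add he j k]
    rfl

lemma chainW_mid : ∀ j k,
    chainW e f j * (f * chainW e f k) = chainW e f (j + k + 1)
  | j, 0 => by
    show chainW e f j * (f * e) = chainW e f (j + 1)
    rfl
  | j, k + 1 => by
    show chainW e f j * (f * (chainW e f k * (f * e))) = chainW e f ((j + k + 1) + 1)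
    rw [show f * (chainW e f k * (f * e)) = (f * chainW e f k) * (f * e) from
      (mul_assoc _ _ _).symm, ← mul_assoc, chainW_mid j k]
    rfl

/-- Key arithmetic lemma: two idempotents inside a "shifted monogenic" family coincide. -/
lemma core_eq (X : ℕ → S) (s : ℕ)
    (law : ∀ p q, X p * X q = X (p + q + s)) {m n : ℕ}
    (hm : 1 ≤ m + s) (hn : 1 ≤ n + s)
    (ha : X m * X m = X m) (hb : X n * X n = X n) : X m = X n := by
  have step : ∀ t : ℕ, X t * X t = X t → ∀ k, X (t + k * (t + s)) = X t := by
    intro t ht k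
    induction k with
    | zero => simp
    | succ k ih =>
      have h := law (t + k * (t + s)) t
      rw [ih, ht] at h
      rw [show t + k * (t + s) + t + s = t + (k + 1) * (t + s) by ring] at h
      exact h.symm
  obtain ⟨M, hM⟩ : ∃ M, m + s = M + 1 := ⟨m + s - 1, by omega⟩
  obtain ⟨N, hN⟩ : ∃ N, n + s = N + 1 := ⟨n + s - 1, by omega⟩
  have h1 := step m ha N
  have h2 := step n hb M
  have hmn : m + N = n + M := by omega
  have hidx : m + N * (m + s) = n + M * (n + s) := by
    rw [hM, hN]
    calc m + N * (M + 1) = (m + N) + N * M := by ring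
      _ = (n + M) + N * M := by rw [hmn]
      _ = n + M * (N + 1) := by ring
  rw [hidx] at h1
  rw [← h1, ← h2]

lemma absorbers (he : e * e = e) (hf : f * f = f) {x : S}
    (hx : x ∈ Subsemigroup.closure {e, f}) :
    (e * x = x ∨ f * x = x) ∧ (x * e = x ∨ x * f = x) := by
  induction hx using Subsemigroup.closure_induction with
  | mem z hz =>
    rcases hz with hz | hz
    · subst z; exact ⟨Or.inl he, Or.inl he⟩
    · simp only [Set.mem_singleton_iff] at hz; subst z
      exact ⟨Or.inr hf, Or.inr hf⟩
  | mul x y hx hy ihx ihy =>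
    constructor
    · rcases ihx.1 with h | h
      · exact Or.inl (by rw [← mul_assoc, h])
      · exact Or.inr (by rw [← mul_assoc, h])
    · rcases ihy.2 with h | h
      · exact Or.inl (by rw [mul_assoc, h])
      · exact Or.inr (by rw [mul_assoc, h])

/-- Splitting lemma: insert an idempotent absorber in the middle of a sandwich. -/
lemma split {g : S} (hg : g * g = g) {x : S} (h : x * g = x) (l y r : S) :
    (l * x * g) * (g * y * r) = l * (x * y) * r := by
  calc (l * x * g) * (g * y * r) = l * (x * (g * (g * (y * r)))) := by
        simp only [mul_assoc]
    _ = l * (x * ((g * g) * (y * r))) := by rw [mul_assoc g g]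
    _ = l * (x * (g * (y * r))) := by rw [hg]
    _ = l * ((x * g) * (y * r)) := by rw [← mul_assoc x g]
    _ = l * (x * (y * r)) := by rw [h]
    _ = l * (x * y) * r := by simp only [mul_assoc]

lemma sandwiches (he : e * e = e) (hf : f * f = f) {x : S}
    (hx : x ∈ Subsemigroup.closure {e, f}) :
    (∃ k, e * x * e = chainW e f k) ∧
    (∃ k, e * x * f = chainW e f k * f) ∧
    (∃ k, f * x * e = f * chainW e f k) ∧
    (f * x * f = f ∨ ∃ k, f * x * f = f * chainW e f k * f) := by
  have hff : ∀ z : S, f * (f * z) = f * z := fun z => by rw [← mul_assoc, hf]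
  have prodA : ∀ j k, (chainW e f j * f) * (f * chainW e f k) = chainW e f (j + k + 1) := by
    intro j k
    rw [mul_assoc, hff, chainW_mid]
  induction hx using Subsemigroup.closure_induction with
  | mem z hz =>
    rcases hz with hz | hz
    · subst z
      refine ⟨⟨0, ?_⟩, ⟨0, ?_⟩, ⟨0, ?_⟩, Or.inr ⟨0, rfl⟩⟩
      · show e * e * e = e
        rw [he, he]
      · show e * e * f = e * f
        rw [he]
      · show f * e * e = f * e
        rw [mul_assoc, he]
    · simp only [Set.mem_singleton_iff] at hz; subst z
      refine ⟨⟨1, ?_⟩, ⟨0, ?_⟩, ⟨0, ?_⟩, Or.inl ?_⟩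
      · show e * f * e = e * (f * e)
        rw [mul_assoc]
      · show e * f * f = e * f
        rw [mul_assoc, hf]
      · show f * f * e = f * e
        rw [hf]
      · rw [hf]; exact hf
  | mul x y hxm hym ihx ihy =>
    obtain ⟨⟨j₁, A₁⟩, ⟨j₂, A₂⟩, ⟨j₃, A₃⟩, A₄⟩ := ihx
    obtain ⟨⟨k₁, B₁⟩, ⟨k₂, B₂⟩, ⟨k₃, B₃⟩, B₄⟩ := ihy
    rcases (absorbers he hf hxm).2 with hxr | hxr
    · -- x * e = x
      refine ⟨⟨j₁ + k₁, ?_⟩, ⟨j₁ + k₂, ?_⟩, ⟨j₃ + k₁, ?_⟩, Or.inr ⟨j₃ + k₂, ?_⟩⟩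
      · rw [← split he hxr e y e, A₁, B₁, chainW_add he]
      · rw [← split he hxr e y f, A₁, B₂, ← mul_assoc, chainW_add he]
      · rw [← split he hxr f y e, A₃, B₁, mul_assoc, chainW_add he]
      · rw [← split he hxr f y f, A₃, B₂, mul_assoc, ← mul_assoc (chainW e f j₃),
          chainW_add he, ← mul_assoc]
    · -- x * f = x
      refine ⟨⟨j₂ + k₃ + 1, ?_⟩, ?_, ?_, ?_⟩
      · rw [← split hf hxr e y e, A₂, B₃, prodA]
      · rcases B₄ with B₄ | ⟨k₄, B₄⟩
        · exact ⟨j₂, by rw [← split hf hxr e y f, A₂, B₄, mul_assoc, hf]⟩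
        · exact ⟨j₂ + k₄ + 1, by rw [← split hf hxr e y f, A₂, B₄, ← mul_assoc, prodA]⟩
      · rcases A₄ with A₄ | ⟨j₄, A₄⟩
        · exact ⟨k₃, by rw [← split hf hxr f y e, A₄, B₃, hff]⟩
        · exact ⟨j₄ + k₃ + 1, by
            rw [← split hf hxr f y e, A₄, B₃, mul_assoc (f * chainW e f j₄), hff,
              mul_assoc f (chainW e f j₄), chainW_mid]⟩
      · rcases A₄ with A₄ | ⟨j₄, A₄⟩
        · rcases B₄ with B₄ | ⟨k₄, B₄⟩
          · exact Or.inl (by rw [← split hf hxr f y f, A₄, B₄, hf])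
          · exact Or.inr ⟨k₄, by rw [← split hf hxr f y f, A₄, B₄, ← mul_assoc, ← mul_assoc, hf]⟩
        · rcases B₄ with B₄ | ⟨k₄, B₄⟩
          · exact Or.inr ⟨j₄, by rw [← split hf hxr f y f, A₄, B₄, mul_assoc, hf]⟩
          · exact Or.inr ⟨j₄ + k₄ + 1, by
              rw [← split hf hxr f y f, A₄, B₄, ← mul_assoc, mul_assoc (f * chainW e f j₄),
                hff, mul_assoc f (chainW e f j₄), chainW_mid]⟩

lemma chain_aux (e f : S) (he : e * e = e) (hf : f * f = f)
    (hmem : ∀ x : S, x ∈ Subsemigroup.closure {e, f})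
    (a b c : S) (ha : a * a = a) (hb : b * b = b)
    (hab : a ≠ b) (hbc : b ≠ c)
    (h1 : a * b = a) (h2 : b * a = a) (h3 : b * c = b) (h4 : c * b = b)
    (hec : e * c = c) : False := by
  have heb : e * b = b := by rw [← h4, ← mul_assoc, hec]
  have hea : e * a = a := by rw [← h2, ← mul_assoc, heb]
  rcases (absorbers he hf (hmem c)).2 with hre | hrf
  · -- c * e = c : everything lives in (ef)^k e
    have hbe : b * e = b := by rw [← h3, mul_assoc, hre]
    have hae : a * e = a := by rw [← h1, mul_assoc, hbe]
    obtain ⟨m, hm⟩ := (sandwiches he hf (hmem a)).1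
    obtain ⟨n, hn⟩ := (sandwiches he hf (hmem b)).1
    rw [hea, hae] at hm
    rw [heb, hbe] at hn
    rcases Nat.eq_zero_or_pos m with rfl | hm1
    · have hm' : a = e := hm
      exact hab (by rw [← h1, hm']; exact heb)
    rcases Nat.eq_zero_or_pos n with rfl | hn1
    · have hn' : b = e := hn
      exact hbc (by rw [← h3, hn']; exact hec)
    have law : ∀ p q, chainW e f p * chainW e f q = chainW e f (p + q + 0) := by
      simpa using chainW_add he
    have ham : chainW e f m * chainW e f m = chainW e f m := by rw [← hm]; exact ha
    have hbn : chainW e f n * chainW e f n = chainW e f n := by rw [← hn]; exact hb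
    have key := core_eq (chainW e f) 0 law (m := m) (n := n) (by omega) (by omega) ham hbn
    exact hab (by rw [hm, hn, key])
  · -- c * f = c : everything lives in (ef)^(k+1)
    have hbf : b * f = b := by rw [← h3, mul_assoc, hrf]
    have haf : a * f = a := by rw [← h1, mul_assoc, hbf]
    obtain ⟨m, hm⟩ := (sandwiches he hf (hmem a)).2.1
    obtain ⟨n, hn⟩ := (sandwiches he hf (hmem b)).2.1
    rw [hea, haf] at hm
    rw [heb, hbf] at hn
    have hff : ∀ z : S, f * (f * z) = f * z := fun z => by rw [← mul_assoc, hf]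
    have law : ∀ p q, (chainW e f p * f) * (chainW e f q * f) = chainW e f (p + q + 1) * f := by
      intro p q
      rw [← mul_assoc, mul_assoc (chainW e f p) f (chainW e f q), chainW_mid]
    have ham : (chainW e f m * f) * (chainW e f m * f) = chainW e f m * f := by
      rw [← hm]; exact ha
    have hbn : (chainW e f n * f) * (chainW e f n * f) = chainW e f n * f := by
      rw [← hn]; exact hb
    have key : chainW e f m * f = chainW e f n * f :=
      core_eq (fun k => chainW e f k * f) 1 law (m := m) (n := n)
        (by omega) (by omega) ham hbn
    exact hab (by rw [hm, hn, key])

end ChainAux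

/-- A semigroup generated by two idempotents contains no three-element chain of
idempotents under the natural partial order (`a ≤ b` iff `ab = ba = a`). -/
theorem no_three_chain_of_idempotents (S : Type*) [Semigroup S] (e f : S)
    (he : e * e = e) (hf : f * f = f)
    (hgen : Subsemigroup.closure {e, f} = (⊤ : Subsemigroup S)) :
    ¬ ∃ a b c : S, a * a = a ∧ b * b = b ∧ c * c = c ∧
        a ≠ b ∧ b ≠ c ∧ a ≠ c ∧
        a * b = a ∧ b * a = a ∧ b * c = b ∧ c * b = b := by
  rintro ⟨a, b, c, ha, hb, hc, hab, hbc, hac, h1, h2, h3, h4⟩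
  have hmem : ∀ x : S, x ∈ Subsemigroup.closure {e, f} := by
    intro x; rw [hgen]; exact Subsemigroup.mem_top x
  rcases (absorbers he hf (hmem c)).1 with hec | hfc
  · exact chain_aux e f he hf hmem a b c ha hb hab hbc h1 h2 h3 h4 hec
  · have hmem' : ∀ x : S, x ∈ Subsemigroup.closure {f, e} := by
      intro x; rw [Set.pair_comm]; exact hmem x
    exact chain_aux f e hf he hmem' a b c ha hb hab hbc h1 h2 h3 h4 hfc
end

section
/- If a band B (a semigroup satisfying x² = x) satisfies a heterotypical identity (an identity p = q in which some variable occurs in p but not in q, or vice versa), then B satisfies the identity xyx = x, i.e., B is a rectangular band. -/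
/-- Evaluation of a nonempty word (given as head and tail) in a semigroup under the
variable assignment `σ`. -/
def evalWord {V S : Type*} [Semigroup S] (σ : V → S) : V → List V → S
  | v, [] => σ v
  | v, w :: t => σ v * evalWord σ w t

lemma evalWord_const {V S : Type*} [Semigroup S] (σ : V → S) (x : S) (hxx : x * x = x) :
    ∀ (w : List V) (v : V), (∀ u ∈ v :: w, σ u = x) → evalWord σ v w = x := by
  intro w
  induction w with
  | nil => intro v h; exact h v (by simp)
  | cons b t ih =>
    intro v h
    have h1 : σ v = x := h v (by simp)
    have h2 : evalWord σ b t = x := ih b (fun u hu => h u (by simp at hu ⊢; tauto))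
    simp [evalWord, h1, h2, hxx]

lemma evalWord_abs {V S : Type*} [Semigroup S] (σ : V → S) (x a : S)
    (hxx : x * x = x) (hxa : x * a = a) (hax : a * x = a) (haa : a * a = a) :
    ∀ (w : List V) (v : V), (∀ u ∈ v :: w, σ u = x ∨ σ u = a) →
      (∃ u ∈ v :: w, σ u = a) → evalWord σ v w = a := by
  intro w
  induction w with
  | nil =>
    intro v h he
    obtain ⟨u, hu, hua⟩ := he
    simp at hu; subst hu
    exact hua
  | cons b t ih =>
    intro v h he
    have hall : ∀ u ∈ b :: t, σ u = x ∨ σ u = a := fun u hu => h u (by simp at hu ⊢; tauto)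
    by_cases hva : σ v = a
    · -- σ v = a
      by_cases ht : ∃ u ∈ b :: t, σ u = a
      · have := ih b hall ht
        simp [evalWord, hva, this, haa]
      · push_neg at ht
        have : ∀ u ∈ b :: t, σ u = x := by
          intro u hu; rcases hall u hu with h' | h'
          · exact h'
          · exact absurd h' (ht u hu)
        have := evalWord_const σ x hxx t b this
        simp [evalWord, hva, this, hax]
    · -- σ v ≠ a, so σ v = x and the witness is in the tail
      have hv : σ v = x := (h v (by simp)).resolve_right hva
      obtain ⟨u, hu, hua⟩ := he
      have hu' : u ∈ b :: t := by
        simp at hu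
        rcases hu with hu | hu | hu
        · exact absurd (hu ▸ hua) hva
        · simp [hu]
        · simp [hu]
      have := ih b hall ⟨u, hu', hua⟩
      simp [evalWord, hv, this, hxa]

/-- If a band `B` satisfies a heterotypical identity `p = q` (the sets of variables
occurring in the two sides differ), then `B` satisfies `x * y * x = x`, i.e. `B` is a
rectangular band. -/
theorem band_heterotypical_implies_rectangular (B : Type*) [Semigroup B]
    (hband : ∀ x : B, x * x = x)
    (V : Type*) (p q : V × List V)
    (hhet : ({p.1} ∪ {v | v ∈ p.2} : Set V) ≠ ({q.1} ∪ {v | v ∈ q.2} : Set V))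
    (hid : ∀ σ : V → B, evalWord σ p.1 p.2 = evalWord σ q.1 q.2) :
    ∀ x y : B, x * y * x = x := by
  intro x y
  set a : B := x * y * x with ha
  have hxx : x * x = x := hband x
  have hxa : x * a = a := by rw [ha, ← mul_assoc, ← mul_assoc, hxx]
  have hax : a * x = a := by rw [ha, mul_assoc, mul_assoc, hxx, ← mul_assoc]
  have haa : a * a = a := hband a
  obtain ⟨s, hs⟩ : ∃ s, ¬ (s ∈ ({p.1} ∪ {v | v ∈ p.2} : Set V) ↔
      s ∈ ({q.1} ∪ {v | v ∈ q.2} : Set V)) := by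
    by_contra hc
    push_neg at hc
    exact hhet (Set.ext hc)
  classical
  set σ : V → B := fun u => if u = s then a else x with hσ
  have hall : ∀ (L : List V) (u : V), u ∈ L → σ u = x ∨ σ u = a := by
    intro L u _; by_cases h : u = s <;> simp [hσ, h]
  have key : ∀ (v : V) (w : List V), (s = v ∨ s ∈ w) → evalWord σ v w = a := by
    intro v w hmem
    refine evalWord_abs σ x a hxx hxa hax haa w v (fun u hu => hall _ u hu) ⟨s, ?_, by simp [hσ]⟩
    simpa using hmem
  have keyx : ∀ (v : V) (w : List V), ¬(s = v ∨ s ∈ w) → evalWord σ v w = x := by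
    intro v w hmem
    refine evalWord_const σ x hxx w v ?_
    intro u hu
    simp only [hσ]
    rw [if_neg]
    rintro rfl
    simp at hu
    tauto
  have hmem_iff : ∀ (v : V) (w : List V),
      s ∈ ({v} ∪ {u | u ∈ w} : Set V) ↔ (s = v ∨ s ∈ w) := by
    intro v w; simp
  rw [hmem_iff, hmem_iff] at hs
  have heq := hid σ
  by_cases h1 : s = p.1 ∨ s ∈ p.2
  · have h2 : ¬(s = q.1 ∨ s ∈ q.2) := by tauto
    rw [key _ _ h1, keyx _ _ h2] at heq
    exact heq
  · have h2 : s = q.1 ∨ s ∈ q.2 := by tauto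
    rw [keyx _ _ h1, key _ _ h2] at heq
    exact heq.symm
end

section
/- Let S be a monoid with |E(S)| ≥ 2 whose idempotents form a band, and let T₀ = M⁰[E(S); m, m; I_m] ∪ {1} (the Rees matrix band over E(S) with identity and zero adjoined). Then T₀ satisfies exactly the same semigroup identities as E(S): a homotypical identity p = q holds in E(S) if and only if it holds in T₀. -/
/-- The diagonal part of the Rees matrix semigroup `M⁰[E; m, m; I_m]` over a band `E`:
elements `λ(e, i, i)` written `(e, i)`, together with a zero, with
`(e,i)(f,j) = (ef, i)` if `i = j`, else `0`. -/
abbrev DiagZero (E : Type*) (m : ℕ) : Type _ := Option (E × Fin m)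

/-- Multiplication on `DiagZero`. -/
def diagMul {E : Type*} [Mul E] {m : ℕ} (a b : DiagZero E m) : DiagZero E m :=
  a.bind fun x => b.bind fun y =>
    if x.2 = y.2 then some (x.1 * y.1, x.2) else none

instance DiagZero.instSemigroup (E : Type*) [Semigroup E] (m : ℕ) :
    Semigroup (DiagZero E m) where
  mul := diagMul
  mul_assoc a b c := by
    show diagMul (diagMul a b) c = diagMul a (diagMul b c)
    rcases a with _ | ⟨s, i⟩ <;> rcases b with _ | ⟨t, j⟩ <;>
      rcases c with _ | ⟨u, k⟩ <;>
      simp only [diagMul, Option.bind] <;> try rfl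
    all_goals split_ifs <;> simp_all [diagMul, Option.bind, mul_assoc]

/-- `T₀ = M⁰[E; m, m; I_m] ∪ {1}`: the diagonal Rees matrix band over `E` together
with its zero and an adjoined identity. -/
abbrev DiagBand (E : Type*) [Semigroup E] (m : ℕ) : Type _ := WithOne (DiagZero E m)

section Aux

lemma withOne_cases {α : Type*} (x : WithOne α) : x = 1 ∨ ∃ a : α, x = WithOne.coe a := by
  induction x using WithOne.recOneCoe with
  | one => exact Or.inl rfl
  | coe a => exact Or.inr ⟨a, rfl⟩

variable {E : Type*} [Monoid E] {m : ℕ} {V : Type*}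

lemma diag_none_mul (b : DiagZero E m) : (none : DiagZero E m) * b = none := rfl

lemma diag_mul_none (a : DiagZero E m) : a * (none : DiagZero E m) = none := by
  cases a <;> rfl

lemma diag_some_mul_some (e f : E) (i j : Fin m) :
    (some (e, i) : DiagZero E m) * some (f, j) =
      if i = j then some (e * f, i) else none := rfl

/-- If all letters map to `1`, the word evaluates to `1`. -/
lemma eval_all_one (σ : V → DiagBand E m) :
    ∀ (l : List V) (v : V), (∀ w ∈ v :: l, σ w = 1) → evalWord σ v l = 1 := by
  intro l
  induction l with
  | nil => intro v h; exact h v (by simp)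
  | cons w t ih =>
      intro v h
      have : evalWord σ v (w :: t) = σ v * evalWord σ w t := rfl
      rw [this, h v (by simp), ih w (fun u hu => h u (List.mem_cons_of_mem _ hu)), one_mul]

/-- Structure lemma: the value of a word is `1` (with all letters `1`), or zero,
or a diagonal element whose index is shared by all non-identity letters. -/
lemma eval_structure (σ : V → DiagBand E m) :
    ∀ (l : List V) (v : V),
      ((∀ w ∈ v :: l, σ w = 1) ∧ evalWord σ v l = 1)
      ∨ evalWord σ v l = WithOne.coe (none : DiagZero E m)
      ∨ ∃ (e : E) (i : Fin m), evalWord σ v l = WithOne.coe (some (e, i) : DiagZero E m)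
          ∧ ∀ w ∈ v :: l, σ w = 1 ∨ ∃ f, σ w = WithOne.coe (some (f, i) : DiagZero E m) := by
  intro l
  induction l with
  | nil =>
      intro v
      rcases withOne_cases (σ v) with hv | ⟨a, hv⟩
      · exact Or.inl ⟨by simp_all, by simp_all [evalWord]⟩
      · rcases a with _ | ⟨e, i⟩
        · exact Or.inr (Or.inl (by simp_all [evalWord]))
        · refine Or.inr (Or.inr ⟨e, i, by simp_all [evalWord], ?_⟩)
          intro w hw; simp at hw; subst hw; exact Or.inr ⟨e, hv⟩
  | cons w t ih =>
      intro v
      have heval : evalWord σ v (w :: t) = σ v * evalWord σ w t := rfl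
      rcases ih w with ⟨hall, h1⟩ | h0 | ⟨e, i, he, hi⟩
      · -- tail evaluates to 1
        rcases withOne_cases (σ v) with hv | ⟨a, hv⟩
        · refine Or.inl ⟨?_, by rw [heval, hv, h1, one_mul]⟩
          intro u hu
          rcases List.mem_cons.mp hu with rfl | hu
          · exact hv
          · exact hall u hu
        · rcases a with _ | ⟨e, i⟩
          · exact Or.inr (Or.inl (by rw [heval, hv, h1, mul_one]))
          · refine Or.inr (Or.inr ⟨e, i, by rw [heval, hv, h1, mul_one], ?_⟩)
            intro u hu
            rcases List.mem_cons.mp hu with rfl | hu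
            · exact Or.inr ⟨e, hv⟩
            · exact Or.inl (hall u hu)
      · -- tail evaluates to 0
        refine Or.inr (Or.inl ?_)
        rw [heval, h0]
        rcases withOne_cases (σ v) with hv | ⟨a, hv⟩
        · rw [hv, one_mul]
        · rw [hv, ← WithOne.coe_mul, diag_mul_none]
      · -- tail evaluates to some (e, i)
        rcases withOne_cases (σ v) with hv | ⟨a, hv⟩
        · refine Or.inr (Or.inr ⟨e, i, by rw [heval, hv, he, one_mul], ?_⟩)
          intro u hu
          rcases List.mem_cons.mp hu with rfl | hu
          · exact Or.inl hv
          · exact hi u hu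
        · rcases a with _ | ⟨f, j⟩
          · exact Or.inr (Or.inl (by rw [heval, hv, he, ← WithOne.coe_mul, diag_none_mul]))
          · by_cases hij : j = i
            · subst hij
              refine Or.inr (Or.inr ⟨f * e, j, ?_, ?_⟩)
              · rw [heval, hv, he, ← WithOne.coe_mul, diag_some_mul_some, if_pos rfl]
              · intro u hu
                rcases List.mem_cons.mp hu with rfl | hu
                · exact Or.inr ⟨f, hv⟩
                · exact hi u hu
            · refine Or.inr (Or.inl ?_)
              rw [heval, hv, he, ← WithOne.coe_mul, diag_some_mul_some, if_neg hij]

/-- If every letter is either `1` (and `τ` is `1` there) or a diagonal element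
`(τ w, i)`, then the word evaluates to `1` with all letters `1`, or to `(eval τ, i)`. -/
lemma eval_diag (σ : V → DiagBand E m) (τ : V → E) (i : Fin m) :
    ∀ (l : List V) (v : V),
      (∀ w ∈ v :: l, (σ w = 1 ∧ τ w = 1) ∨
          σ w = WithOne.coe (some (τ w, i) : DiagZero E m)) →
      ((∀ w ∈ v :: l, σ w = 1) ∧ evalWord τ v l = 1)
      ∨ evalWord σ v l = WithOne.coe (some (evalWord τ v l, i) : DiagZero E m) := by
  intro l
  induction l with
  | nil =>
      intro v h
      rcases h v (by simp) with ⟨h1, h2⟩ | h3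
      · refine Or.inl ⟨?_, h2⟩
        intro u hu; simp at hu; subst hu; exact h1
      · exact Or.inr h3
  | cons w t ih =>
      intro v h
      have heval : evalWord σ v (w :: t) = σ v * evalWord σ w t := rfl
      have hevalτ : evalWord τ v (w :: t) = τ v * evalWord τ w t := rfl
      have htail := ih w (fun u hu => h u (List.mem_cons_of_mem _ hu))
      rcases h v (by simp) with ⟨h1, h2⟩ | h3
      · rcases htail with ⟨hall, h1'⟩ | hc
        · refine Or.inl ⟨?_, by rw [hevalτ, h2, h1', one_mul]⟩
          intro u hu
          rcases List.mem_cons.mp hu with rfl | hu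
          · exact h1
          · exact hall u hu
        · refine Or.inr ?_
          rw [heval, h1, one_mul, hc, hevalτ, h2, one_mul]
      · rcases htail with ⟨hall, h1'⟩ | hc
        · refine Or.inr ?_
          rw [heval, h3, eval_all_one σ t w hall, mul_one, hevalτ, h1', mul_one]
        · refine Or.inr ?_
          rw [heval, h3, hc, ← WithOne.coe_mul, diag_some_mul_some, if_pos rfl, hevalτ]

/-- Embedding of `E` on the diagonal: evaluation commutes. -/
lemma eval_embed [NeZero m] (σ : V → E) :
    ∀ (l : List V) (v : V),
      evalWord (fun w => WithOne.coe (some (σ w, (0 : Fin m)) : DiagZero E m)) v l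
        = WithOne.coe (some (evalWord σ v l, (0 : Fin m)) : DiagZero E m) := by
  intro l
  induction l with
  | nil => intro v; rfl
  | cons w t ih =>
      intro v
      show _ * _ = _
      rw [ih w, ← WithOne.coe_mul, diag_some_mul_some, if_pos rfl]
      rfl

end Aux

/-- Corollary 3.7 / Theorem 4.6(b): let `E` be a band with identity having at least two
elements (the band of idempotents of a monoid `S`), and let `T₀ = M⁰[E; m, m; I_m] ∪ {1}`.
Then a homotypical identity `p = q` (both sides involve the same variables) holds in `E`
if and only if it holds in `T₀`; that is, `T₀` satisfies exactly the same semigroup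
identities as `E`. -/
theorem diagBand_same_identities (E : Type*) [Monoid E] [Nontrivial E]
    (hband : ∀ x : E, x * x = x) (m : ℕ) (hm : 1 ≤ m)
    (V : Type*) (p q : V × List V)
    (hhomo : ({p.1} ∪ {v | v ∈ p.2} : Set V) = ({q.1} ∪ {v | v ∈ q.2} : Set V)) :
    (∀ σ : V → E, evalWord σ p.1 p.2 = evalWord σ q.1 q.2) ↔
    (∀ σ : V → DiagBand E m, evalWord σ p.1 p.2 = evalWord σ q.1 q.2) := by
  have hmem : ∀ w : V, w ∈ p.1 :: p.2 ↔ w ∈ q.1 :: q.2 := by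
    intro w
    have := Set.ext_iff.mp hhomo w
    simpa [List.mem_cons] using this
  haveI : NeZero m := ⟨by omega⟩
  constructor
  · -- E identity implies T₀ identity
    intro hE σ
    by_cases hall : ∀ w ∈ p.1 :: p.2, σ w = 1
    · rw [eval_all_one σ p.2 p.1 hall,
        eval_all_one σ q.2 q.1 (fun w hw => hall w ((hmem w).mpr hw))]
    · by_cases hzero : ∃ w ∈ p.1 :: p.2, σ w = WithOne.coe (none : DiagZero E m)
      · -- some letter is the zero: both sides are zero
        obtain ⟨w₀, hw₀, hσw₀⟩ := hzero
        have hz : ∀ (l : List V) (v : V), w₀ ∈ v :: l →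
            evalWord σ v l = WithOne.coe (none : DiagZero E m) := by
          intro l v hmem'
          rcases eval_structure σ l v with ⟨ha, _⟩ | h0 | ⟨e, i, _, hi⟩
          · exact absurd (ha w₀ hmem') (by rw [hσw₀]; exact WithOne.coe_ne_one)
          · exact h0
          · rcases hi w₀ hmem' with h1 | ⟨f, hf⟩
            · exact absurd h1 (by rw [hσw₀]; exact WithOne.coe_ne_one)
            · rw [hσw₀] at hf
              exact absurd (WithOne.coe_inj.mp hf) (by simp)
        rw [hz p.2 p.1 hw₀, hz q.2 q.1 ((hmem w₀).mp hw₀)]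
      · by_cases hmix : ∃ w ∈ p.1 :: p.2, ∃ w' ∈ p.1 :: p.2, ∃ (e f : E) (i j : Fin m),
            σ w = WithOne.coe (some (e, i) : DiagZero E m) ∧
            σ w' = WithOne.coe (some (f, j) : DiagZero E m) ∧ i ≠ j
        · -- two letters with different indices: both sides zero
          obtain ⟨w, hw, w', hw', e, f, i, j, hwe, hwf, hij⟩ := hmix
          have hz : ∀ (l : List V) (v : V), w ∈ v :: l → w' ∈ v :: l →
              evalWord σ v l = WithOne.coe (none : DiagZero E m) := by
            intro l v hm1 hm2
            rcases eval_structure σ l v with ⟨ha, _⟩ | h0 | ⟨g, k, _, hk⟩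
            · exact absurd (ha w hm1) (by rw [hwe]; exact WithOne.coe_ne_one)
            · exact h0
            · exfalso
              have h1 : i = k := by
                rcases hk w hm1 with h1 | ⟨f', hf'⟩
                · exact absurd h1 (by rw [hwe]; exact WithOne.coe_ne_one)
                · rw [hwe] at hf'
                  have := WithOne.coe_inj.mp hf'
                  simp at this; tauto
              have h2 : j = k := by
                rcases hk w' hm2 with h1 | ⟨f', hf'⟩
                · exact absurd h1 (by rw [hwf]; exact WithOne.coe_ne_one)
                · rw [hwf] at hf'
                  have := WithOne.coe_inj.mp hf'
                  simp at this; tauto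
              exact hij (h1.trans h2.symm)
          rw [hz p.2 p.1 hw hw',
            hz q.2 q.1 ((hmem w).mp hw) ((hmem w').mp hw')]
        · -- all non-identity letters lie on one diagonal `i`
          push_neg at hall
          obtain ⟨w₀, hw₀, hσw₀⟩ := hall
          rcases withOne_cases (σ w₀) with hv₀ | ⟨a₀, ha₀⟩
          · exact absurd hv₀ hσw₀
          rcases a₀ with _ | ⟨e₀, i⟩
          · exact absurd ha₀ (by push_neg at hzero; exact hzero w₀ hw₀)
          have hclass : ∀ w ∈ p.1 :: p.2, σ w = 1 ∨
              ∃ e, σ w = WithOne.coe (some (e, i) : DiagZero E m) := by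
            intro w hw
            rcases withOne_cases (σ w) with h1 | ⟨a, ha⟩
            · exact Or.inl h1
            rcases a with _ | ⟨e, j⟩
            · exact absurd ha (by push_neg at hzero; exact hzero w hw)
            · by_cases hij : j = i
              · subst hij; exact Or.inr ⟨e, ha⟩
              · exact absurd ⟨w, hw, w₀, hw₀, e, e₀, j, i, ha, ha₀, hij⟩ hmix
          classical
          set τ : V → E := fun w =>
            if h : ∃ e, σ w = WithOne.coe (some (e, i) : DiagZero E m)
            then h.choose else 1 with hτ
          have hτprop : ∀ w ∈ p.1 :: p.2, (σ w = 1 ∧ τ w = 1) ∨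
              σ w = WithOne.coe (some (τ w, i) : DiagZero E m) := by
            intro w hw
            rcases hclass w hw with h1 | ⟨e, he⟩
            · refine Or.inl ⟨h1, ?_⟩
              rw [hτ]
              simp only
              rw [dif_neg]
              rintro ⟨e, he⟩
              rw [h1] at he
              exact WithOne.one_ne_coe he
            · refine Or.inr ?_
              have hex : ∃ e, σ w = WithOne.coe (some (e, i) : DiagZero E m) := ⟨e, he⟩
              rw [hτ]; simp only; rw [dif_pos hex]
              exact hex.choose_spec
          have hp := eval_diag σ τ i p.2 p.1 hτprop
          have hq := eval_diag σ τ i q.2 q.1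
            (fun w hw => hτprop w ((hmem w).mpr hw))
          rcases hp with ⟨hallp, _⟩ | hp
          · exact absurd (hallp w₀ hw₀) hσw₀
          rcases hq with ⟨hallq, _⟩ | hq
          · exact absurd (hallq w₀ ((hmem w₀).mp hw₀)) hσw₀
          rw [hp, hq, hE τ]
  · -- T₀ identity implies E identity
    intro hT σ
    have := hT (fun w => WithOne.coe (some (σ w, (0 : Fin m)) : DiagZero E m))
    rw [eval_embed σ p.2 p.1, eval_embed σ q.2 q.1] at this
    have := WithOne.coe_inj.mp this
    simpa using this
end
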